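/- arXiv:1304.5975 — 2 statements merged into one kernel-verified Lean document; each statement's English description precedes it below -/
import Mathlib

section
/- Let s ∈ (0,1], 0 < u < v, p, r > 1 with 1/p + 1/r = 1. Then |A(u^s, v^s) - L_s^s(u,v)| ≤ ((v-u)/4)(1/(p+1))^(1/p) [ (s(2^(s+1)-1) u^(r(s-1))/(2^s(s+1)) + s v^(r(s-1))/(2^s(s+1)))^(1/r) + (s u^(r(s-1))/(2^s(s+1)) + s(2^(s+1)-1) v^(r(s-1))/(2^s(s+1)))^(1/r) ], where A(a,b) = (a+b)/2 is the arithmetic mean and L_s(u,v) = ((v^(s+1)-u^(s+1))/((s+1)(v-u)))^(1/s) is the generalized logarithmic mean, so L_s^s(u,v) = (v^(s+1)-u^(s+1))/((s+1)(v-u)). -/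
open Real Set MeasureTheory intervalIntegral

lemma convexOn_rpow_nonpos {c : ℝ} (hc : c ≤ 0) :
    ConvexOn ℝ (Set.Ioi (0:ℝ)) fun x : ℝ => x ^ c := by
  have hmono : MonotoneOn (deriv fun x : ℝ => x ^ c) (interior (Set.Ioi (0:ℝ))) := by
    rw [interior_Ioi]
    intro x hx y hy hxy
    rw [Real.deriv_rpow_const x c,
      Real.deriv_rpow_const y c]
    have h1 : y ^ (c - 1) ≤ x ^ (c - 1) :=
      Real.rpow_le_rpow_of_nonpos hx hxy (by linarith)
    rcases lt_or_eq_of_le hc with h | h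
    · exact (mul_le_mul_left_of_neg h).2 h1
    · subst h; simp
  have hdiff : DifferentiableOn ℝ (fun x : ℝ => x ^ c) (interior (Set.Ioi (0:ℝ))) := by
    rw [interior_Ioi]
    intro x hx
    exact (Real.differentiableAt_rpow_const_of_ne c (ne_of_gt hx)).differentiableWithinAt
  exact MonotoneOn.convexOn_of_deriv (convex_Ioi 0) (fun x hx =>
    (Real.continuousAt_rpow_const x c (Or.inl (ne_of_gt hx))).continuousWithinAt) hdiff hmono

lemma self_le_rpow_aux {t s : ℝ} (ht0 : 0 ≤ t) (ht1 : t ≤ 1) (hs0 : 0 < s) (hs1 : s ≤ 1) :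
    t ≤ t ^ s := by
  rcases eq_or_lt_of_le ht0 with h | h
  · rw [← h, Real.zero_rpow hs0.ne']
  · calc t = t ^ (1:ℝ) := (Real.rpow_one t).symm
    _ ≤ t ^ s := Real.rpow_le_rpow_of_exponent_ge h ht1 hs1

lemma sconv_bound {c s : ℝ} (hc : c ≤ 0) (hs0 : 0 < s) (hs1 : s ≤ 1) {a b t : ℝ}
    (ha : 0 < a) (hb : 0 < b) (ht0 : 0 ≤ t) (ht1 : t ≤ 1) :
    (t * a + (1 - t) * b) ^ c ≤ t ^ s * a ^ c + (1 - t) ^ s * b ^ c := by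
  have h1 : (t * a + (1 - t) * b) ^ c ≤ t * a ^ c + (1 - t) * b ^ c := by
    have := (convexOn_rpow_nonpos hc).2 (Set.mem_Ioi.2 ha) (Set.mem_Ioi.2 hb)
      ht0 (show (0:ℝ) ≤ 1 - t by linarith) (show t + (1 - t) = 1 by ring)
    simpa [smul_eq_mul] using this
  have h2 : t * a ^ c ≤ t ^ s * a ^ c :=
    mul_le_mul_of_nonneg_right (self_le_rpow_aux ht0 ht1 hs0 hs1) (Real.rpow_nonneg ha.le c)
  have h3 : (1 - t) * b ^ c ≤ (1 - t) ^ s * b ^ c :=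
    mul_le_mul_of_nonneg_right (self_le_rpow_aux (by linarith) (by linarith) hs0 hs1)
      (Real.rpow_nonneg hb.le c)
  linarith

lemma integral_affine_rpow (e k l a b : ℝ) (he : 0 < e) (hk : k ≠ 0) :
    ∫ x in a..b, (k * x + l) ^ e
      = ((k * b + l) ^ (e + 1) - (k * a + l) ^ (e + 1)) / (k * (e + 1)) := by
  have hcont : Continuous fun x : ℝ => (k * x + l) ^ e := by
    rw [continuous_iff_continuousAt]
    intro x
    exact (Real.continuousAt_rpow_const _ _ (Or.inr he.le)).comp
      (by fun_prop)
  have hderiv : ∀ x ∈ Set.uIcc a b,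
      HasDerivAt (fun y : ℝ => (k * y + l) ^ (e + 1) / (k * (e + 1)))
        ((k * x + l) ^ e) x := by
    intro x _
    have hin : HasDerivAt (fun y : ℝ => k * y + l) k x := by
      simpa using ((hasDerivAt_id x).const_mul k).add_const l
    have h1 : HasDerivAt (fun y : ℝ => (k * y + l) ^ (e + 1))
        (k * (e + 1) * (k * x + l) ^ (e + 1 - 1)) x :=
      hin.rpow_const (Or.inr (by linarith))
    have h2 := h1.div_const (k * (e + 1))
    have hne : k * (e + 1) ≠ 0 := mul_ne_zero hk (by positivity)
    have : k * (e + 1) * (k * x + l) ^ (e + 1 - 1) / (k * (e + 1))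
        = (k * x + l) ^ e := by
      rw [add_sub_cancel_right]
      field_simp
    rwa [this] at h2
  rw [intervalIntegral.integral_eq_sub_of_hasDerivAt hderiv
    (hcont.intervalIntegrable a b)]
  ring

lemma holder_interval {a b p r : ℝ} (hab : a ≤ b) (hpr : Real.HolderConjugate p r)
    {f g : ℝ → ℝ} (hf : ContinuousOn f (Set.Icc a b)) (hg : ContinuousOn g (Set.Icc a b))
    (hf0 : ∀ x ∈ Set.Icc a b, 0 ≤ f x) (hg0 : ∀ x ∈ Set.Icc a b, 0 ≤ g x) :
    ∫ x in a..b, f x * g x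
      ≤ (∫ x in a..b, f x ^ p) ^ (1 / p) * (∫ x in a..b, g x ^ r) ^ (1 / r) := by
  rw [intervalIntegral.integral_of_le hab, intervalIntegral.integral_of_le hab,
    intervalIntegral.integral_of_le hab]
  set μ := volume.restrict (Set.Ioc a b) with hμ
  haveI : IsFiniteMeasure μ := by
    constructor
    rw [hμ, MeasureTheory.Measure.restrict_apply_univ]
    exact measure_Ioc_lt_top
  have hsub : Set.Ioc a b ⊆ Set.Icc a b := Set.Ioc_subset_Icc_self
  have hfm : AEStronglyMeasurable f μ :=
    (hf.mono hsub).aestronglyMeasurable measurableSet_Ioc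
  have hgm : AEStronglyMeasurable g μ :=
    (hg.mono hsub).aestronglyMeasurable measurableSet_Ioc
  obtain ⟨Cf, hCf⟩ := (isCompact_Icc (a := a) (b := b)).exists_bound_of_continuousOn hf
  obtain ⟨Cg, hCg⟩ := (isCompact_Icc (a := a) (b := b)).exists_bound_of_continuousOn hg
  have hfLp : MeasureTheory.MemLp f (ENNReal.ofReal p) μ :=
    MeasureTheory.MemLp.of_bound hfm Cf
      ((MeasureTheory.ae_restrict_iff' measurableSet_Ioc).2
        (Filter.Eventually.of_forall fun x hx => hCf x (hsub hx)))
  have hgLp : MeasureTheory.MemLp g (ENNReal.ofReal r) μ :=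
    MeasureTheory.MemLp.of_bound hgm Cg
      ((MeasureTheory.ae_restrict_iff' measurableSet_Ioc).2
        (Filter.Eventually.of_forall fun x hx => hCg x (hsub hx)))
  exact MeasureTheory.integral_mul_le_Lp_mul_Lq_of_nonneg hpr
    ((MeasureTheory.ae_restrict_iff' measurableSet_Ioc).2
      (Filter.Eventually.of_forall fun x hx => hf0 x (hsub hx)))
    ((MeasureTheory.ae_restrict_iff' measurableSet_Ioc).2
      (Filter.Eventually.of_forall fun x hx => hg0 x (hsub hx)))
    hfLp hgLp

lemma piece_bound {u v p r s : ℝ} (hu : 0 < u) (huv : u < v) (hs0 : 0 < s) (hs1 : s ≤ 1)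
    (hr0 : 0 < r) (hpr : Real.HolderConjugate p r) {a b : ℝ} (hab : a ≤ b)
    (hua : u ≤ a) (hbv : b ≤ v) (w : ℝ → ℝ)
    (hw : ContinuousOn w (Set.Icc a b)) (hw0 : ∀ x ∈ Set.Icc a b, 0 ≤ w x) :
    ∫ x in a..b, w x * (s * x ^ (s - 1))
      ≤ (∫ x in a..b, w x ^ p) ^ (1 / p) *
        (∫ x in a..b, s ^ r * (((v - x) / (v - u)) ^ s * u ^ (r * (s - 1))
            + ((x - u) / (v - u)) ^ s * v ^ (r * (s - 1)))) ^ (1 / r) := by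
  have hD : 0 < v - u := by linarith
  have hxpos : ∀ x ∈ Set.Icc a b, 0 < x := fun x hx => lt_of_lt_of_le hu (hua.trans hx.1)
  have hg : ContinuousOn (fun x : ℝ => s * x ^ (s - 1)) (Set.Icc a b) := by
    intro x hx
    exact (((Real.continuousAt_rpow_const _ _ (Or.inl (hxpos x hx).ne')).comp
      continuousAt_id).const_smul s).continuousWithinAt
  have hg0 : ∀ x ∈ Set.Icc a b, 0 ≤ s * x ^ (s - 1) :=
    fun x hx => mul_nonneg hs0.le (Real.rpow_nonneg (hxpos x hx).le _)
  refine (holder_interval hab hpr hw hg hw0 hg0).trans ?_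
  have hint1 : IntervalIntegrable (fun x => (s * x ^ (s - 1)) ^ r) volume a b := by
    apply ContinuousOn.intervalIntegrable
    rw [Set.uIcc_of_le hab]
    exact fun x hx => (hg x hx).rpow_const (Or.inr hr0.le)
  have c1 : Continuous fun x : ℝ => ((v - x) / (v - u)) ^ s :=
    continuous_iff_continuousAt.2 fun x =>
      (Real.continuousAt_rpow_const _ _ (Or.inr hs0.le)).comp (by fun_prop)
  have c2 : Continuous fun x : ℝ => ((x - u) / (v - u)) ^ s :=
    continuous_iff_continuousAt.2 fun x =>
      (Real.continuousAt_rpow_const _ _ (Or.inr hs0.le)).comp (by fun_prop)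
  have hint2 : IntervalIntegrable (fun x => s ^ r * (((v - x) / (v - u)) ^ s * u ^ (r * (s - 1))
      + ((x - u) / (v - u)) ^ s * v ^ (r * (s - 1)))) volume a b :=
    (continuous_const.mul ((c1.mul continuous_const).add
      (c2.mul continuous_const))).intervalIntegrable a b
  have hmono : ∫ x in a..b, (s * x ^ (s - 1)) ^ r
      ≤ ∫ x in a..b, s ^ r * (((v - x) / (v - u)) ^ s * u ^ (r * (s - 1))
          + ((x - u) / (v - u)) ^ s * v ^ (r * (s - 1))) := by
    apply intervalIntegral.integral_mono_on hab hint1 hint2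
    intro x hx
    have hx0 : 0 < x := hxpos x hx
    have ht0 : 0 ≤ (v - x) / (v - u) := by
      apply div_nonneg _ hD.le
      have := hx.2
      linarith
    have ht1 : (v - x) / (v - u) ≤ 1 := by
      rw [div_le_one hD]
      have := hx.1
      linarith
    have hc : r * (s - 1) ≤ 0 :=
      mul_nonpos_of_nonneg_of_nonpos hr0.le (by linarith)
    have hkey : (v - x) / (v - u) * u + (1 - (v - x) / (v - u)) * v = x := by
      field_simp
      ring
    have h1t : 1 - (v - x) / (v - u) = (x - u) / (v - u) := by
      field_simp
      ring
    have hb := sconv_bound hc hs0 hs1 hu (hu.trans huv) ht0 ht1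
    rw [hkey, h1t] at hb
    calc (s * x ^ (s - 1)) ^ r = s ^ r * x ^ (r * (s - 1)) := by
          rw [Real.mul_rpow hs0.le (Real.rpow_nonneg hx0.le _),
            ← Real.rpow_mul hx0.le, mul_comm (s-1) r]
      _ ≤ s ^ r * (((v - x) / (v - u)) ^ s * u ^ (r * (s - 1))
            + ((x - u) / (v - u)) ^ s * v ^ (r * (s - 1))) := by
          apply mul_le_mul_of_nonneg_left hb (Real.rpow_nonneg hs0.le r)
  have h0 : 0 ≤ ∫ x in a..b, (s * x ^ (s - 1)) ^ r :=
    intervalIntegral.integral_nonneg hab (fun x hx => Real.rpow_nonneg (hg0 x hx) r)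
  have h0w : 0 ≤ (∫ x in a..b, w x ^ p) ^ (1 / p) :=
    Real.rpow_nonneg (intervalIntegral.integral_nonneg hab
      (fun x hx => Real.rpow_nonneg (hw0 x hx) p)) _
  exact mul_le_mul_of_nonneg_left
    (Real.rpow_le_rpow h0 hmono (by positivity)) h0w

lemma final_scalar {D p r s B : ℝ} (hD : 0 < D) (hp : 1 < p) (hr : 1 < r)
    (hpr : 1 / p + 1 / r = 1) (hs0 : 0 < s) (hs1 : s ≤ 1) (hB : 0 ≤ B) :
    ((D / 2) ^ (p + 1) / (p + 1)) ^ (1 / p) * (s ^ r * D * B / (2 ^ (s + 1) * (s + 1))) ^ (1 / r)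
      ≤ D * (D / 4 * (1 / (p + 1)) ^ (1 / p) * (s * B / (2 ^ s * (s + 1))) ^ (1 / r)) := by
  have hp0 : 0 < p := by linarith
  have hr0 : 0 < r := by linarith
  have hp1 : (0:ℝ) < p + 1 := by linarith
  have hs1' : (0:ℝ) < s + 1 := by linarith
  have hE : (0:ℝ) < 2 ^ (s + 1) := Real.rpow_pos_of_pos two_pos _
  have hEs : (0:ℝ) < 2 ^ s := Real.rpow_pos_of_pos two_pos _
  set Q := B / (2 ^ (s + 1) * (s + 1)) with hQ
  have hQ0 : 0 ≤ Q := div_nonneg hB (by positivity)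
  -- LHS rewriting
  have hD2 : (0:ℝ) < D / 2 := by linarith
  have hL1 : ((D / 2) ^ (p + 1) / (p + 1)) ^ (1 / p)
      = (D / 2) * (D / 2) ^ (1 / p) / (p + 1) ^ (1 / p) := by
    rw [Real.div_rpow (Real.rpow_nonneg (by positivity) _) hp1.le,
      ← Real.rpow_mul hD2.le]
    congr 1
    rw [show (p + 1) * (1 / p) = 1 + 1 / p by field_simp,
      Real.rpow_add hD2, Real.rpow_one]
  have hL2 : (s ^ r * D * B / (2 ^ (s + 1) * (s + 1))) ^ (1 / r)
      = s * D ^ (1 / r) * Q ^ (1 / r) := by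
    rw [show s ^ r * D * B / (2 ^ (s + 1) * (s + 1)) = s ^ r * (D * Q) by rw [hQ]; ring,
      Real.mul_rpow (Real.rpow_nonneg hs0.le _) (mul_nonneg hD.le hQ0),
      Real.mul_rpow hD.le hQ0, ← Real.rpow_mul hs0.le,
      mul_div_cancel₀ 1 hr0.ne', Real.rpow_one, mul_assoc]
  have hR1 : (s * B / (2 ^ s * (s + 1))) ^ (1 / r)
      = 2 ^ (1 / r) * s ^ (1 / r) * Q ^ (1 / r) := by
    rw [show s * B / (2 ^ s * (s + 1)) = 2 * s * Q by
        rw [hQ, Real.rpow_add two_pos, Real.rpow_one]; field_simp,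
      Real.mul_rpow (by positivity) hQ0, Real.mul_rpow (by norm_num) hs0.le]
  have hR2 : (1 / (p + 1) : ℝ) ^ (1 / p) = 1 / (p + 1) ^ (1 / p) := by
    rw [Real.div_rpow zero_le_one hp1.le, Real.one_rpow]
  -- key powers
  have hDpow : (D / 2) ^ (1 / p) * D ^ (1 / r) = D / 2 ^ (1 / p) := by
    rw [Real.div_rpow hD.le (by norm_num), div_mul_eq_mul_div,
      ← Real.rpow_add hD, hpr, Real.rpow_one]
  have h2pow : (2:ℝ) ^ (1 / p) * 2 ^ (1 / r) = 2 := by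
    rw [← Real.rpow_add two_pos, hpr, Real.rpow_one]
  have hspow : s ≤ s ^ (1 / r) := by
    apply self_le_rpow_aux hs0.le hs1 (by positivity)
    rw [div_le_one hr0]; linarith
  rw [hL1, hL2, hR1, hR2]
  have hP : (0:ℝ) < (p + 1) ^ (1 / p) := Real.rpow_pos_of_pos hp1 _
  have h2p : (0:ℝ) < 2 ^ (1 / p) := Real.rpow_pos_of_pos two_pos _
  have h2r : (0:ℝ) < 2 ^ (1 / r) := Real.rpow_pos_of_pos two_pos _
  have hsr : (0:ℝ) < s ^ (1 / r) := Real.rpow_pos_of_pos hs0 _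
  calc D / 2 * (D / 2) ^ (1 / p) / (p + 1) ^ (1 / p) * (s * D ^ (1 / r) * Q ^ (1 / r))
      = (D * (D / 2 ^ (1 / p))) * s * Q ^ (1 / r) / (2 * (p + 1) ^ (1 / p)) := by
        rw [← hDpow]; field_simp
    _ ≤ (D * (D / 2 ^ (1 / p))) * s ^ (1 / r) * Q ^ (1 / r) / (2 * (p + 1) ^ (1 / p)) := by
        have hA : 0 ≤ D * (D / 2 ^ (1 / p)) := by positivity
        have := mul_le_mul_of_nonneg_right (mul_le_mul_of_nonneg_left hspow hA)
          (Real.rpow_nonneg hQ0 (1/r))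
        apply div_le_div_of_nonneg_right this ?_ |>.trans_eq rfl
        positivity
    _ = D * (D / 4 * (1 / (p + 1) ^ (1 / p)) * (2 ^ (1 / r) * s ^ (1 / r) * Q ^ (1 / r))) := by
        rw [show (4:ℝ) = 2 ^ (1/p) * 2 ^ (1/r) * 2 by rw [h2pow]; norm_num]
        field_simp

lemma integral_sub_div_rpow (e a b z D : ℝ) (he : 0 < e) (hD : D ≠ 0) :
    ∫ x in a..b, ((z - x) / D) ^ e
      = D * (((z - a) / D) ^ (e + 1) - ((z - b) / D) ^ (e + 1)) / (e + 1) := by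
  have hfun : ∀ x : ℝ, (z - x) / D = -(1 / D) * x + z / D := fun x => by
    field_simp; ring
  simp only [hfun]
  rw [integral_affine_rpow e (-(1/D)) (z/D) a b he (by simpa using hD)]
  rw [show -(1/D) * b + z/D = (z - b)/D from (hfun b).symm,
    show -(1/D) * a + z/D = (z - a)/D from (hfun a).symm]
  have h1 : e + 1 ≠ 0 := by positivity
  rw [div_eq_div_iff (mul_ne_zero (neg_ne_zero.2 (one_div_ne_zero hD)) h1) h1]
  ring_nf
  simp [mul_inv_cancel₀ hD]

lemma integral_add_div_rpow (e a b z D : ℝ) (he : 0 < e) (hD : D ≠ 0) :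
    ∫ x in a..b, ((x - z) / D) ^ e
      = D * (((b - z) / D) ^ (e + 1) - ((a - z) / D) ^ (e + 1)) / (e + 1) := by
  have hfun : ∀ x : ℝ, (x - z) / D = (1 / D) * x + -(z / D) := fun x => by
    field_simp; ring
  simp only [hfun]
  rw [integral_affine_rpow e (1/D) (-(z/D)) a b he (by simpa using hD)]
  rw [show (1/D) * b + -(z/D) = (b - z)/D from (hfun b).symm,
    show (1/D) * a + -(z/D) = (a - z)/D from (hfun a).symm]
  have h1 : e + 1 ≠ 0 := by positivity
  rw [div_eq_div_iff (mul_ne_zero (one_div_ne_zero hD) h1) h1]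
  ring_nf
  simp [mul_inv_cancel₀ hD]

lemma integral_sub_rpow (e a b z : ℝ) (he : 0 < e) :
    ∫ x in a..b, (z - x) ^ e = ((z - a) ^ (e + 1) - (z - b) ^ (e + 1)) / (e + 1) := by
  have := integral_sub_div_rpow e a b z 1 he one_ne_zero
  simpa using this

lemma integral_add_rpow (e a b z : ℝ) (he : 0 < e) :
    ∫ x in a..b, (x - z) ^ e = ((b - z) ^ (e + 1) - (a - z) ^ (e + 1)) / (e + 1) := by
  have := integral_add_div_rpow e a b z 1 he one_ne_zero
  simpa using this

theorem stmt_17 (u v p r s : ℝ) (hu : 0 < u) (huv : u < v)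
    (hs : s ∈ Set.Ioc (0:ℝ) 1) (hp : 1 < p) (hr : 1 < r) (hpr : 1 / p + 1 / r = 1) :
    |(u ^ s + v ^ s) / 2 - (v ^ (s + 1) - u ^ (s + 1)) / ((s + 1) * (v - u))|
      ≤ ((v - u) / 4) * (1 / (p + 1)) ^ (1 / p) *
          ((s * (2 ^ (s + 1) - 1) * u ^ (r * (s - 1)) / (2 ^ s * (s + 1))
              + s * v ^ (r * (s - 1)) / (2 ^ s * (s + 1))) ^ (1 / r)
            + (s * u ^ (r * (s - 1)) / (2 ^ s * (s + 1))
              + s * (2 ^ (s + 1) - 1) * v ^ (r * (s - 1)) / (2 ^ s * (s + 1))) ^ (1 / r)) := by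
  obtain ⟨hs0, hs1⟩ := hs
  have hv : 0 < v := hu.trans huv
  have hD : 0 < v - u := by linarith
  set m := (u + v) / 2 with hm
  have hum : u ≤ m := by rw [hm]; linarith
  have hmv : m ≤ v := by rw [hm]; linarith
  have hs1' : (0:ℝ) < s + 1 := by linarith
  have hp0 : 0 < p := by linarith
  have hr0 : 0 < r := by linarith
  have hE : (0:ℝ) < 2 ^ (s + 1) := Real.rpow_pos_of_pos two_pos _
  have hE1 : (1:ℝ) ≤ 2 ^ (s + 1) := by
    have : (2:ℝ) ^ (0:ℝ) ≤ 2 ^ (s + 1) :=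
      Real.rpow_le_rpow_of_exponent_le one_le_two (by linarith)
    simpa using this
  have hEs : (0:ℝ) < 2 ^ s := Real.rpow_pos_of_pos two_pos _
  set c := r * (s - 1) with hc
  have huc : (0:ℝ) ≤ u ^ c := Real.rpow_nonneg hu.le _
  have hvc : (0:ℝ) ≤ v ^ c := Real.rpow_nonneg hv.le _
  have hconj : Real.HolderConjugate p r := ⟨by simpa [one_div] using hpr, by linarith, by linarith⟩
  have hhalf : ((1:ℝ)/2) ^ (s+1) = 1 / 2 ^ (s+1) := by
    rw [Real.div_rpow zero_le_one (by norm_num), Real.one_rpow]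
  -- continuity helpers
  have hrpowcont : ∀ e : ℝ, ContinuousOn (fun x : ℝ => x ^ e) (Set.Ici u) :=
    fun e x hx => (Real.continuousAt_rpow_const _ _
      (Or.inl (hu.trans_le hx).ne')).continuousWithinAt
  have hcontg : ContinuousOn (fun x : ℝ => (x - m) * (s * x ^ (s - 1))) (Set.Ici u) :=
    ((continuousOn_id.sub continuousOn_const).mul
      (continuousOn_const.mul (hrpowcont (s-1))))
  have hint1 : IntervalIntegrable (fun x : ℝ => (x - m) * (s * x ^ (s - 1))) volume u m :=
    (hcontg.mono (by rw [Set.uIcc_of_le hum]; exact Set.Icc_subset_Ici_self)).intervalIntegrable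
  have hint2 : IntervalIntegrable (fun x : ℝ => (x - m) * (s * x ^ (s - 1))) volume m v :=
    (hcontg.mono (by
      rw [Set.uIcc_of_le hmv]
      exact (Set.Icc_subset_Icc_left hum).trans Set.Icc_subset_Ici_self)).intervalIntegrable
  have hsplit : (∫ x in u..m, (x - m) * (s * x ^ (s - 1)))
      + (∫ x in m..v, (x - m) * (s * x ^ (s - 1)))
      = ∫ x in u..v, (x - m) * (s * x ^ (s - 1)) :=
    intervalIntegral.integral_add_adjacent_intervals hint1 hint2
  -- value of the full integral
  have hIval : ∫ x in u..v, (x - m) * (s * x ^ (s - 1))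
      = s * (v ^ (s+1) - u ^ (s+1)) / (s+1) - m * (v ^ s - u ^ s) := by
    have hcong : Set.EqOn (fun x : ℝ => (x - m) * (s * x ^ (s - 1)))
        (fun x : ℝ => s * x ^ s - (s * m) * x ^ (s - 1)) (Set.uIcc u v) := by
      intro x hx
      rw [Set.uIcc_of_le huv.le] at hx
      have hx0 : 0 < x := hu.trans_le hx.1
      have hxs : x ^ s = x ^ (s - 1) * x := by
        rw [← Real.rpow_add_one hx0.ne' (s-1)]
        norm_num
      simp only
      rw [hxs]; ring
    rw [intervalIntegral.integral_congr hcong]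
    have hi1 : IntervalIntegrable (fun x : ℝ => s * x ^ s) volume u v :=
      ((continuousOn_const.mul (hrpowcont s)).mono
        (by rw [Set.uIcc_of_le huv.le]; exact Set.Icc_subset_Ici_self)).intervalIntegrable
    have hi2 : IntervalIntegrable (fun x : ℝ => (s*m) * x ^ (s-1)) volume u v :=
      ((continuousOn_const.mul (hrpowcont (s-1))).mono
        (by rw [Set.uIcc_of_le huv.le]; exact Set.Icc_subset_Ici_self)).intervalIntegrable
    rw [intervalIntegral.integral_sub hi1 hi2, intervalIntegral.integral_const_mul,
      intervalIntegral.integral_const_mul,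
      integral_rpow (Or.inl (by linarith : (-1:ℝ) < s)),
      integral_rpow (Or.inl (by linarith : (-1:ℝ) < s - 1)),
      show s - 1 + 1 = s by ring]
    field_simp
  -- the identity
  have hident : (u ^ s + v ^ s) / 2 - (v ^ (s + 1) - u ^ (s + 1)) / ((s + 1) * (v - u))
      = ((∫ x in u..m, (x - m) * (s * x ^ (s - 1)))
        + (∫ x in m..v, (x - m) * (s * x ^ (s - 1)))) / (v - u) := by
    rw [hsplit, hIval, Real.rpow_add_one hv.ne' s, Real.rpow_add_one hu.ne' s]
    rw [hm]
    field_simp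
    ring
  have c1 : Continuous fun x : ℝ => ((v - x) / (v - u)) ^ s :=
    continuous_iff_continuousAt.2 fun x =>
      (Real.continuousAt_rpow_const _ _ (Or.inr hs0.le)).comp (by fun_prop)
  have c2 : Continuous fun x : ℝ => ((x - u) / (v - u)) ^ s :=
    continuous_iff_continuousAt.2 fun x =>
      (Real.continuousAt_rpow_const _ _ (Or.inr hs0.le)).comp (by fun_prop)
  have hB1 : (0:ℝ) ≤ (2^(s+1) - 1) * u^c + v^c :=
    add_nonneg (mul_nonneg (by linarith) huc) hvc
  have hB2 : (0:ℝ) ≤ u^c + (2^(s+1) - 1) * v^c :=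
    add_nonneg huc (mul_nonneg (by linarith) hvc)
  -- piece 1
  have hw1 : |∫ x in u..m, (x - m) * (s * x ^ (s - 1))|
      ≤ ∫ x in u..m, (m - x) * (s * x ^ (s - 1)) := by
    refine (intervalIntegral.abs_integral_le_integral_abs hum).trans_eq ?_
    apply intervalIntegral.integral_congr
    intro x hx
    rw [Set.uIcc_of_le hum] at hx
    have hx0 : 0 < x := hu.trans_le hx.1
    simp only
    rw [abs_mul, abs_of_nonpos (by linarith [hx.2] : x - m ≤ 0),
      abs_of_nonneg (mul_nonneg hs0.le (Real.rpow_nonneg hx0.le _))]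
    ring
  have hpb1 := piece_bound hu huv hs0 hs1 hr0 hconj hum le_rfl hmv (fun x => m - x)
    (continuousOn_const.sub continuousOn_id) (fun x hx => by
      have := hx.2; linarith)
  have hWint1 : ∫ x in u..m, (m - x) ^ p = ((v-u)/2) ^ (p+1) / (p+1) := by
    rw [integral_sub_rpow p u m m hp0, show m - m = (0:ℝ) by ring,
      Real.zero_rpow (by positivity : (0:ℝ) < p+1).ne', show m - u = (v-u)/2 by rw [hm]; ring]
    ring
  have hJ1 : ∫ x in u..m, s^r * (((v-x)/(v-u))^s * u^c + ((x-u)/(v-u))^s * v^c)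
      = s^r * (v-u) * ((2^(s+1) - 1) * u^c + v^c) / (2^(s+1)*(s+1)) := by
    rw [intervalIntegral.integral_const_mul,
      intervalIntegral.integral_add (f := fun x => ((v-x)/(v-u))^s * u^c)
        (g := fun x => ((x-u)/(v-u))^s * v^c) ((c1.mul continuous_const).intervalIntegrable u m)
        ((c2.mul continuous_const).intervalIntegrable u m),
      intervalIntegral.integral_mul_const, intervalIntegral.integral_mul_const,
      integral_sub_div_rpow s u m v (v-u) hs0 hD.ne',
      integral_add_div_rpow s u m u (v-u) hs0 hD.ne',
      show (v-u)/(v-u) = (1:ℝ) from div_self hD.ne',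
      show (v - m)/(v-u) = 1/2 by rw [hm]; field_simp; ring,
      show (m - u)/(v-u) = 1/2 by rw [hm]; field_simp; ring,
      show (u - u)/(v-u) = (0:ℝ) by simp,
      Real.one_rpow, Real.zero_rpow hs1'.ne', hhalf]
    field_simp
    ring
  have hfin1 := final_scalar (D := v - u) (B := (2^(s+1) - 1) * u^c + v^c)
    hD hp hr hpr hs0 hs1 hB1
  have hle1 : |∫ x in u..m, (x - m) * (s * x ^ (s - 1))|
      ≤ (v-u) * ((v-u)/4 * (1/(p+1))^(1/p)
          * (s * ((2^(s+1) - 1) * u^c + v^c) / (2^s*(s+1)))^(1/r)) := by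
    refine hw1.trans (hpb1.trans ?_)
    rw [hWint1, hJ1]
    exact hfin1
  -- piece 2
  have hw2 : |∫ x in m..v, (x - m) * (s * x ^ (s - 1))|
      ≤ ∫ x in m..v, (x - m) * (s * x ^ (s - 1)) := by
    refine (intervalIntegral.abs_integral_le_integral_abs hmv).trans_eq ?_
    apply intervalIntegral.integral_congr
    intro x hx
    rw [Set.uIcc_of_le hmv] at hx
    have hx0 : 0 < x := hu.trans_le (hum.trans hx.1)
    simp only
    rw [abs_mul, abs_of_nonneg (by linarith [hx.1] : (0:ℝ) ≤ x - m),
      abs_of_nonneg (mul_nonneg hs0.le (Real.rpow_nonneg hx0.le _))]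
  have hpb2 := piece_bound hu huv hs0 hs1 hr0 hconj hmv hum le_rfl (fun x => x - m)
    (continuousOn_id.sub continuousOn_const) (fun x hx => by
      have := hx.1; linarith)
  have hWint2 : ∫ x in m..v, (x - m) ^ p = ((v-u)/2) ^ (p+1) / (p+1) := by
    rw [integral_add_rpow p m v m hp0, show m - m = (0:ℝ) by ring,
      Real.zero_rpow (by positivity : (0:ℝ) < p+1).ne', show v - m = (v-u)/2 by rw [hm]; ring]
    ring
  have hJ2 : ∫ x in m..v, s^r * (((v-x)/(v-u))^s * u^c + ((x-u)/(v-u))^s * v^c)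
      = s^r * (v-u) * (u^c + (2^(s+1) - 1) * v^c) / (2^(s+1)*(s+1)) := by
    rw [intervalIntegral.integral_const_mul,
      intervalIntegral.integral_add (f := fun x => ((v-x)/(v-u))^s * u^c)
        (g := fun x => ((x-u)/(v-u))^s * v^c) ((c1.mul continuous_const).intervalIntegrable m v)
        ((c2.mul continuous_const).intervalIntegrable m v),
      intervalIntegral.integral_mul_const, intervalIntegral.integral_mul_const,
      integral_sub_div_rpow s m v v (v-u) hs0 hD.ne',
      integral_add_div_rpow s m v u (v-u) hs0 hD.ne',
      show (v-u)/(v-u) = (1:ℝ) from div_self hD.ne',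
      show (v - m)/(v-u) = 1/2 by rw [hm]; field_simp; ring,
      show (m - u)/(v-u) = 1/2 by rw [hm]; field_simp; ring,
      show (v - v)/(v-u) = (0:ℝ) by simp,
      Real.one_rpow, Real.zero_rpow hs1'.ne', hhalf]
    field_simp
    ring
  have hfin2 := final_scalar (D := v - u) (B := u^c + (2^(s+1) - 1) * v^c)
    hD hp hr hpr hs0 hs1 hB2
  have hle2 : |∫ x in m..v, (x - m) * (s * x ^ (s - 1))|
      ≤ (v-u) * ((v-u)/4 * (1/(p+1))^(1/p)
          * (s * (u^c + (2^(s+1) - 1) * v^c) / (2^s*(s+1)))^(1/r)) := by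
    refine hw2.trans (hpb2.trans ?_)
    rw [hWint2, hJ2]
    exact hfin2
  -- assemble
  rw [hident, abs_div, abs_of_pos hD, div_le_iff₀ hD]
  have hbase1 : s * (2^(s+1) - 1) * u^c / (2^s*(s+1)) + s * v^c / (2^s*(s+1))
      = s * ((2^(s+1) - 1) * u^c + v^c) / (2^s*(s+1)) := by ring
  have hbase2 : s * u^c / (2^s*(s+1)) + s * (2^(s+1) - 1) * v^c / (2^s*(s+1))
      = s * (u^c + (2^(s+1) - 1) * v^c) / (2^s*(s+1)) := by ring
  rw [hbase1, hbase2]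
  calc |(∫ x in u..m, (x - m) * (s * x ^ (s - 1)))
        + (∫ x in m..v, (x - m) * (s * x ^ (s - 1)))|
      ≤ |∫ x in u..m, (x - m) * (s * x ^ (s - 1))|
        + |∫ x in m..v, (x - m) * (s * x ^ (s - 1))| := abs_add_le _ _
    _ ≤ (v-u) * ((v-u)/4 * (1/(p+1))^(1/p)
          * (s * ((2^(s+1) - 1) * u^c + v^c) / (2^s*(s+1)))^(1/r))
        + (v-u) * ((v-u)/4 * (1/(p+1))^(1/p)
          * (s * (u^c + (2^(s+1) - 1) * v^c) / (2^s*(s+1)))^(1/r)) := add_le_add hle1 hle2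
    _ = (v-u)/4 * (1/(p+1))^(1/p)
          * ((s * ((2^(s+1) - 1) * u^c + v^c) / (2^s*(s+1)))^(1/r)
            + (s * (u^c + (2^(s+1) - 1) * v^c) / (2^s*(s+1)))^(1/r)) * (v-u) := by ring
end

section
/- Let 0 < u < v. Then |(1/3) A(u⁻¹, v⁻¹) + (2/3) A⁻¹(u,v) - L⁻¹(u,v)| ≤ (5/36)(v-u) A(u⁻², v⁻²), where A(a,b) = (a+b)/2 is the arithmetic mean, A⁻¹(u,v) = 2/(u+v), and L(u,v) = (v-u)/(ln v - ln u) is the logarithmic mean, so L⁻¹(u,v) = (ln v - ln u)/(v-u). -/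
private lemma aux_log_lb {x : ℝ} (hx : 1 ≤ x) : 2 * (x - 1) / (x + 1) ≤ Real.log x := by
  set f : ℝ → ℝ := fun x => Real.log x - 2 * (x - 1) / (x + 1) with hf
  have hder : ∀ y : ℝ, 0 < y → HasDerivAt f (1 / y - 4 / (y + 1) ^ 2) y := by
    intro y hy
    have h1 : HasDerivAt Real.log (1 / y) y := by
      simpa [one_div] using Real.hasDerivAt_log hy.ne'
    have hn : HasDerivAt (fun x : ℝ => 2 * (x - 1)) 2 y := by
      simpa using ((hasDerivAt_id y).sub_const 1).const_mul 2
    have hd : HasDerivAt (fun x : ℝ => x + 1) 1 y := (hasDerivAt_id y).add_const 1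
    have h2 : HasDerivAt (fun x : ℝ => 2 * (x - 1) / (x + 1)) (4 / (y + 1) ^ 2) y := by
      have := hn.div hd (by positivity)
      exact this.congr_deriv (by ring)
    exact h1.sub h2
  have hmono : MonotoneOn f (Set.Ici (1 : ℝ)) := by
    apply monotoneOn_of_deriv_nonneg (convex_Ici 1)
    · intro y hy
      have hy1 : (1 : ℝ) ≤ y := hy
      exact ((hder y (by linarith)).differentiableAt).continuousAt.continuousWithinAt
    · intro y hy
      rw [interior_Ici] at hy
      exact ((hder y (by linarith [hy.out])).differentiableAt).differentiableWithinAt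
    · intro y hy
      rw [interior_Ici] at hy
      have hy1 : (1 : ℝ) < y := hy
      rw [(hder y (by linarith)).deriv]
      have h : 1 / y - 4 / (y + 1) ^ 2 = (y - 1) ^ 2 / (y * (y + 1) ^ 2) := by
        field_simp
        ring
      rw [h]
      positivity
  have h0 : f 1 = 0 := by simp [hf]
  have h1 : f 1 ≤ f x := hmono (by simp) hx hx
  rw [h0] at h1
  simp only [hf] at h1
  linarith

private lemma aux_log_ub {x : ℝ} (hx : 1 ≤ x) : Real.log x ≤ (x - x⁻¹) / 2 := by
  set f : ℝ → ℝ := fun x => (x - x⁻¹) / 2 - Real.log x with hf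
  have hder : ∀ y : ℝ, 0 < y → HasDerivAt f ((1 + y⁻¹ ^ 2) / 2 - 1 / y) y := by
    intro y hy
    have h1 : HasDerivAt Real.log (1 / y) y := by
      simpa [one_div] using Real.hasDerivAt_log hy.ne'
    have h2 : HasDerivAt (fun x : ℝ => (x - x⁻¹) / 2) ((1 + y⁻¹ ^ 2) / 2) y := by
      have := ((hasDerivAt_id y).sub (hasDerivAt_inv hy.ne')).div_const 2
      exact this.congr_deriv (by ring)
    exact h2.sub h1
  have hmono : MonotoneOn f (Set.Ici (1 : ℝ)) := by
    apply monotoneOn_of_deriv_nonneg (convex_Ici 1)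
    · intro y hy
      have hy1 : (1 : ℝ) ≤ y := hy
      exact ((hder y (by linarith)).differentiableAt).continuousAt.continuousWithinAt
    · intro y hy
      rw [interior_Ici] at hy
      exact ((hder y (by linarith [hy.out])).differentiableAt).differentiableWithinAt
    · intro y hy
      rw [interior_Ici] at hy
      have hy1 : (1 : ℝ) < y := hy
      rw [(hder y (by linarith)).deriv]
      have h : (1 + y⁻¹ ^ 2) / 2 - 1 / y = (y - 1) ^ 2 / (2 * y ^ 2) := by
        field_simp
        ring
      rw [h]
      positivity
  have h0 : f 1 = 0 := by simp [hf]
  have h1 : f 1 ≤ f x := hmono (by simp) hx hx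
  rw [h0] at h1
  simp only [hf] at h1
  linarith

theorem stmt_19 (u v : ℝ) (hu : 0 < u) (huv : u < v) :
    |(1 / 3) * ((u⁻¹ + v⁻¹) / 2) + (2 / 3) * (2 / (u + v))
        - (Real.log v - Real.log u) / (v - u)|
      ≤ (5 / 36) * (v - u) * ((u⁻¹ ^ 2 + v⁻¹ ^ 2) / 2) := by
  have hv : 0 < v := hu.trans huv
  have hvu : 0 < v - u := sub_pos.2 huv
  have huv0 : 0 < u + v := by linarith
  have hx1 : 1 ≤ v / u := (one_le_div hu).2 huv.le
  have hlog : Real.log v - Real.log u = Real.log (v / u) := (Real.log_div hv.ne' hu.ne').symm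
  -- lower bound on log
  have hlb : 2 * (v - u) / (u + v) ≤ Real.log v - Real.log u := by
    rw [hlog]
    have h := aux_log_lb hx1
    have heq : 2 * (v / u - 1) / (v / u + 1) = 2 * (v - u) / (u + v) := by
      rw [div_eq_div_iff (by positivity) (by positivity)]
      field_simp
      ring
    linarith [heq ▸ h]
  -- upper bound on log
  have hub : Real.log v - Real.log u ≤ (v ^ 2 - u ^ 2) / (2 * u * v) := by
    rw [hlog]
    have h := aux_log_ub hx1
    have heq : (v / u - (v / u)⁻¹) / 2 = (v ^ 2 - u ^ 2) / (2 * u * v) := by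
      rw [inv_div]
      rw [div_eq_div_iff (by norm_num) (by positivity)]
      field_simp
    linarith [heq ▸ h]
  have hL_ub : (Real.log v - Real.log u) / (v - u) ≤ (u + v) / (2 * u * v) := by
    rw [div_le_iff₀ hvu]
    calc Real.log v - Real.log u ≤ (v ^ 2 - u ^ 2) / (2 * u * v) := hub
      _ = (u + v) / (2 * u * v) * (v - u) := by field_simp; ring
  have hL_lb : 2 / (u + v) ≤ (Real.log v - Real.log u) / (v - u) := by
    rw [le_div_iff₀ hvu]
    calc 2 / (u + v) * (v - u) = 2 * (v - u) / (u + v) := by ring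
      _ ≤ Real.log v - Real.log u := hlb
  rw [abs_le]
  constructor
  · -- L⁻¹ - S ≤ R, i.e. -R ≤ S - L⁻¹
    have key : (5 / 36) * (v - u) * ((u⁻¹ ^ 2 + v⁻¹ ^ 2) / 2)
        - ((u + v) / (2 * u * v)
          - ((1 / 3) * ((u⁻¹ + v⁻¹) / 2) + (2 / 3) * (2 / (u + v))))
        = ((v - u) * (5 * (v ^ 3 + u ^ 2 * v + u * v ^ 2 + u ^ 3) - 24 * u * v * (v - u)))
            / (72 * u ^ 2 * v ^ 2 * (u + v)) := by
      field_simp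
      ring
    have hpoly : 0 ≤ 5 * (v ^ 3 + u ^ 2 * v + u * v ^ 2 + u ^ 3) - 24 * u * v * (v - u) := by
      nlinarith [sq_nonneg (10 * v - 19 * u), mul_pos hu hv, sq_nonneg (v - u), mul_pos hu hu]
    have hnum : 0 ≤ ((v - u) * (5 * (v ^ 3 + u ^ 2 * v + u * v ^ 2 + u ^ 3)
        - 24 * u * v * (v - u))) / (72 * u ^ 2 * v ^ 2 * (u + v)) := by positivity
    linarith [key ▸ hnum]
  · -- S - L⁻¹ ≤ R
    have key : (5 / 36) * (v - u) * ((u⁻¹ ^ 2 + v⁻¹ ^ 2) / 2)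
        - (((1 / 3) * ((u⁻¹ + v⁻¹) / 2) + (2 / 3) * (2 / (u + v))) - 2 / (u + v))
        = ((v - u) * (5 * (u ^ 2 + v ^ 2) * (u + v) - 12 * u * v * (v - u)))
            / (72 * u ^ 2 * v ^ 2 * (u + v)) := by
      field_simp
      ring
    have hpoly : 0 ≤ 5 * (u ^ 2 + v ^ 2) * (u + v) - 12 * u * v * (v - u) := by
      nlinarith [sq_nonneg (10 * v - 7 * u), mul_pos hu hv, mul_pos hu hu]
    have hnum : 0 ≤ ((v - u) * (5 * (u ^ 2 + v ^ 2) * (u + v)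
        - 12 * u * v * (v - u))) / (72 * u ^ 2 * v ^ 2 * (u + v)) := by positivity
    linarith [key ▸ hnum]
end
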